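/- Let ψ : [0,∞) → [0,∞) be a decreasing differentiable function with −1 ≤ ψ'(s) ≤ 0, ψ(0) = 1, and suppose A := ∫₀^∞ s^{b−1} ψ(s) ds > 0 is finite, with b ≥ 2. Then for every τ > 0: b(b+4)·∫₀^∞ s^{b+3} ψ(s) ds − (b+4)·τ^4·(bA) + 4·τ^{b+4} ≥ (1/3)·τ^{b+2}. -/

import Mathlib

open Real MeasureTheory Set Filter Topology

section AuxLemmas

lemma aux_q_mono (b : ℝ) (hb : 2 ≤ b) :
    MonotoneOn (fun x : ℝ => b*(b+4)*x^(b-1)*(x+1)*(x^2+1) - 8) (Ici 0) := by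
  intro x hx y hy hxy
  simp only [mem_Ici] at hx hy
  have h1 : x ^ (b-1) ≤ y ^ (b-1) := Real.rpow_le_rpow hx hxy (by linarith)
  have h2 : (0:ℝ) ≤ x ^ (b-1) := Real.rpow_nonneg hx _
  have h3 : (0:ℝ) ≤ y ^ (b-1) := Real.rpow_nonneg hy _
  have hb0 : (0:ℝ) < b*(b+4) := by nlinarith
  have A1 : x^(b-1)*(x+1) ≤ y^(b-1)*(y+1) := mul_le_mul h1 (by linarith) (by linarith) (by linarith)
  have A2 : (x^(b-1)*(x+1))*(x^2+1) ≤ (y^(b-1)*(y+1))*(y^2+1) :=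
    mul_le_mul A1 (by nlinarith) (by positivity) (by positivity)
  have := mul_le_mul_of_nonneg_left A2 hb0.le
  dsimp only
  nlinarith [this]

lemma aux_h_hasderiv (b : ℝ) (hb : 2 ≤ b) (x : ℝ) :
    HasDerivAt (fun x : ℝ => b * x^(b+4) - (b+4) * x^b + 4 - 4*(x-1)^2)
      (b*(b+4)*x^(b+3) - (b+4)*b*x^(b-1) - 8*(x-1)) x := by
  have h1 : HasDerivAt (fun x : ℝ => x ^ (b+4)) ((b+4) * x^(b+4-1)) x :=
    Real.hasDerivAt_rpow_const (Or.inr (by linarith))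
  have h2 : HasDerivAt (fun x : ℝ => x ^ b) (b * x^(b-1)) x :=
    Real.hasDerivAt_rpow_const (Or.inr (by linarith))
  have h3 : HasDerivAt (fun x : ℝ => 4*(x-1)^2) (8*(x-1)) x := by
    have h0 : HasDerivAt (fun x : ℝ => x - 1) 1 x := (hasDerivAt_id' x).sub_const 1
    have := (h0.pow 2).const_mul (4:ℝ)
    refine this.congr_deriv ?_
    push_cast
    ring
  have := (((h1.const_mul b).sub (h2.const_mul (b+4))).add_const 4).sub h3
  refine this.congr_deriv ?_
  rw [show b+4-1 = b+3 by ring]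
  ring

lemma aux_pointwise (b : ℝ) (hb : 2 ≤ b) {x : ℝ} (hx : 0 ≤ x) :
    4*(x-1)^2 ≤ b * x ^ (b+4) - (b+4) * x ^ b + 4 := by
  set h : ℝ → ℝ := fun x => b * x^(b+4) - (b+4) * x^b + 4 - 4*(x-1)^2 with hh
  set q : ℝ → ℝ := fun x => b*(b+4)*x^(b-1)*(x+1)*(x^2+1) - 8 with hq
  have hderiv : ∀ y : ℝ, 0 ≤ y → deriv h y = (y-1) * q y := by
    intro y hy
    rw [(aux_h_hasderiv b hb y).deriv]
    have hy4 : y^(b-1) * (y:ℝ)^(4:ℕ) = y^(b+3) := by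
      rw [← Real.rpow_natCast y 4, ← Real.rpow_add' hy (by push_cast; intro hc; linarith)]
      congr 1
      push_cast
      ring
    simp only [hq]
    push_cast at hy4 ⊢
    linear_combination (-(b*(b+4))) * hy4
  have hdiffh : Differentiable ℝ h := fun y => (aux_h_hasderiv b hb y).differentiableAt
  have hcont : Continuous h := hdiffh.continuous
  have h0 : h 0 = 0 := by
    simp only [hh]
    rw [Real.zero_rpow (by linarith), Real.zero_rpow (by linarith)]
    ring
  have h1 : h 1 = 0 := by simp only [hh]; rw [Real.one_rpow, Real.one_rpow]; ring
  have key : 0 ≤ h x := by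
    rcases le_or_gt 1 x with hx1 | hx1
    · have hmono : MonotoneOn h (Icc 1 x) := by
        apply monotoneOn_of_deriv_nonneg (convex_Icc 1 x) hcont.continuousOn
          (fun y _ => (hdiffh y).differentiableWithinAt)
        intro y hy
        rw [interior_Icc] at hy
        have hy1 : 1 ≤ y := le_of_lt hy.1
        rw [hderiv y (by linarith)]
        have : q 1 ≤ q y := aux_q_mono b hb (by norm_num) (mem_Ici.mpr (by linarith)) hy1
        have hq1 : (0:ℝ) ≤ q 1 := by
          simp only [hq, Real.one_rpow]
          nlinarith
        nlinarith
      calc (0:ℝ) = h 1 := h1.symm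
        _ ≤ h x := hmono (left_mem_Icc.mpr hx1) ⟨hx1, le_refl x⟩ hx1
    · rcases le_or_gt (q x) 0 with hqx | hqx
      · have hmono : MonotoneOn h (Icc 0 x) := by
          apply monotoneOn_of_deriv_nonneg (convex_Icc 0 x) hcont.continuousOn
            (fun y _ => (hdiffh y).differentiableWithinAt)
          intro y hy
          rw [interior_Icc] at hy
          rw [hderiv y (le_of_lt hy.1)]
          have : q y ≤ q x := aux_q_mono b hb (mem_Ici.mpr hy.1.le) (mem_Ici.mpr hx) hy.2.le
          nlinarith [hy.2, hx1]
        calc (0:ℝ) = h 0 := h0.symm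
          _ ≤ h x := hmono ⟨le_refl 0, hx⟩ ⟨hx, le_refl x⟩ hx
      · have hanti : AntitoneOn h (Icc x 1) := by
          apply antitoneOn_of_deriv_nonpos (convex_Icc x 1) hcont.continuousOn
            (fun y _ => (hdiffh y).differentiableWithinAt)
          intro y hy
          rw [interior_Icc] at hy
          have hy0 : 0 ≤ y := le_trans hx (le_of_lt hy.1)
          rw [hderiv y hy0]
          have : q x ≤ q y := aux_q_mono b hb (mem_Ici.mpr hx) (mem_Ici.mpr hy0) hy.1.le
          nlinarith [hy.2]
        calc (0:ℝ) = h 1 := h1.symm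
          _ ≤ h x := hanti ⟨le_refl x, le_of_lt hx1⟩ ⟨le_of_lt hx1, le_refl 1⟩ (le_of_lt hx1)
  simp only [hh] at key
  linarith

lemma aux_scaled (b : ℝ) (hb : 2 ≤ b) {τ s : ℝ} (hτ : 0 < τ) (hs : 0 ≤ s) :
    4 * τ^(b+2) * (s-τ)^2 ≤ b * s^(b+4) - (b+4) * τ^(4:ℕ) * s^b + 4 * τ^(b+4) := by
  have hx : (0:ℝ) ≤ s/τ := by positivity
  have key := aux_pointwise b hb hx
  have hpos : (0:ℝ) < τ^(b+4) := Real.rpow_pos_of_pos hτ _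
  have hτb : (0:ℝ) < τ^b := Real.rpow_pos_of_pos hτ _
  have hτb2 : (0:ℝ) < τ^(b+2) := Real.rpow_pos_of_pos hτ _
  have h1 : (s/τ)^(b+4) = s^(b+4) / τ^(b+4) := Real.div_rpow hs hτ.le _
  have h2 : (s/τ)^b = s^b / τ^b := Real.div_rpow hs hτ.le _
  have hb4 : τ^(b+4) = τ^b * τ^(4:ℕ) := by
    rw [← Real.rpow_natCast τ 4, ← Real.rpow_add hτ]; norm_num
  have hb2 : τ^(b+4) = τ^(b+2) * τ^(2:ℕ) := by
    rw [← Real.rpow_natCast τ 2, ← Real.rpow_add hτ]; congr 1; push_cast; ring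
  have e1 : τ^(b+4) * (s/τ)^(b+4) = s^(b+4) := by rw [h1]; field_simp
  have e2 : τ^(b+4) * (s/τ)^b = τ^(4:ℕ) * s^b := by
    rw [h2, hb4]; field_simp
  have e3 : τ^(b+4) * (s/τ-1)^2 = τ^(b+2)*(s-τ)^2 := by
    rw [hb2]; field_simp
  have hmul := mul_le_mul_of_nonneg_left key hpos.le
  nlinarith [hmul, e1, e2, e3]

lemma bathtub (w : ℝ → ℝ)
    (hw0 : ∀ s, 0 < s → 0 ≤ w s) (hw1 : ∀ s, 0 < s → w s ≤ 1)
    (hwint : IntegrableOn w (Ioi 0))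
    (hwtot : ∫ s in Ioi (0:ℝ), w s = 1)
    (τ : ℝ) (hτ : 0 < τ)
    (hgint : IntegrableOn (fun s => (s-τ)^2 * w s) (Ioi 0)) :
    1/12 ≤ ∫ s in Ioi (0:ℝ), (s-τ)^2 * w s := by
  obtain ⟨a, ha0, hu0, hu1, hcrit⟩ :
      ∃ a : ℝ, 0 ≤ a ∧ a ≤ τ ∧ τ - a ≤ 1/2 ∧ (0 < a → τ - a = 1/2) := by
    rcases le_total τ (1/2) with h | h
    · exact ⟨0, le_refl 0, hτ.le, by linarith, fun h0 => absurd h0 (lt_irrefl 0)⟩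
    · exact ⟨τ - 1/2, by linarith, by linarith, by linarith, fun _ => by ring⟩
  have hac : a ≤ τ + 1/2 := by linarith
  have hsub : Ioc a (τ + 1/2) ⊆ Ioi 0 := fun x hx => lt_of_le_of_lt ha0 hx.1
  have hIm : MeasurableSet (Ioc a (τ + 1/2)) := measurableSet_Ioc
  have hdiffm : MeasurableSet (Ioi (0:ℝ) \ Ioc a (τ + 1/2)) := measurableSet_Ioi.diff hIm
  have hdisj : Disjoint (Ioc a (τ + 1/2)) (Ioi (0:ℝ) \ Ioc a (τ + 1/2)) := disjoint_sdiff_right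
  have hsplit : ∀ f : ℝ → ℝ, IntegrableOn f (Ioi 0) →
      ∫ s in Ioi (0:ℝ), f s
        = (∫ s in Ioc a (τ + 1/2), f s) + ∫ s in Ioi (0:ℝ) \ Ioc a (τ + 1/2), f s := by
    intro f hf
    have key := setIntegral_union hdisj hdiffm
      (hf.mono_set hsub) (hf.mono_set diff_subset)
    rw [union_diff_cancel hsub] at key
    exact key
  have htail : ∫ s in Ioi (0:ℝ) \ Ioc a (τ + 1/2), w s
      = 1 - ∫ s in Ioc a (τ + 1/2), w s := by
    have := hsplit w hwint
    rw [hwtot] at this; linarith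
  -- bound off I
  have hb1 : (1/4) * (1 - ∫ s in Ioc a (τ + 1/2), w s)
      ≤ ∫ s in Ioi (0:ℝ) \ Ioc a (τ + 1/2), (s-τ)^2 * w s := by
    have hmono : ∫ s in Ioi (0:ℝ) \ Ioc a (τ + 1/2), (1/4) * w s
        ≤ ∫ s in Ioi (0:ℝ) \ Ioc a (τ + 1/2), (s-τ)^2 * w s := by
      apply setIntegral_mono_on
        ((hwint.mono_set diff_subset).const_mul _)
        (hgint.mono_set diff_subset) hdiffm
      intro s hs
      have hs0 : 0 < s := hs.1
      have hfar : 1/4 ≤ (s - τ)^2 := by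
        rcases not_and_or.mp (fun h => hs.2 (⟨h.1, h.2⟩ : s ∈ Ioc a (τ + 1/2))) with h | h
        · push_neg at h
          have hapos : 0 < a := lt_of_lt_of_le hs0 h
          have haτ : τ - a = 1/2 := hcrit hapos
          nlinarith [h, haτ]
        · push_neg at h
          nlinarith [h]
      have := mul_le_mul_of_nonneg_right hfar (hw0 s hs0)
      linarith
    rw [MeasureTheory.integral_const_mul, htail] at hmono
    exact hmono
  -- bound on I
  have hwI : IntegrableOn w (Ioc a (τ + 1/2)) := hwint.mono_set hsub
  have hgwI : IntegrableOn (fun s => (s-τ)^2 * w s) (Ioc a (τ + 1/2)) := hgint.mono_set hsub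
  have hcontpoly : Continuous (fun s : ℝ => (s-τ)^2 - 1/4) :=
    (((continuous_id.sub continuous_const).pow 2).sub continuous_const)
  have hpolyI : IntegrableOn (fun s => (s-τ)^2 - 1/4) (Ioc a (τ + 1/2)) :=
    hcontpoly.integrableOn_Ioc
  have hb2 : (∫ s in Ioc a (τ + 1/2), ((s-τ)^2 - 1/4))
      + (1/4) * (∫ s in Ioc a (τ + 1/2), w s)
      ≤ ∫ s in Ioc a (τ + 1/2), (s-τ)^2 * w s := by
    have hstep : ∫ s in Ioc a (τ + 1/2), ((s-τ)^2 - 1/4)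
        ≤ ∫ s in Ioc a (τ + 1/2), ((s-τ)^2 - 1/4) * w s := by
      apply setIntegral_mono_on hpolyI ?_ hIm
      · intro s hs
        have hs0 : 0 < s := hsub hs
        have hnear : (s - τ)^2 ≤ 1/4 := by
          obtain ⟨hs1, hs2⟩ := hs
          nlinarith [hs1, hs2, hu1, hu0]
        have h1 := mul_le_mul_of_nonpos_left (hw1 s hs0) (by linarith : (s-τ)^2 - 1/4 ≤ 0)
        linarith [h1]
      · have : (fun s => ((s-τ)^2 - 1/4) * w s) = fun s => (s-τ)^2 * w s - (1/4) * w s := by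
          funext s; ring
        rw [this]
        exact hgwI.sub (hwI.const_mul _)
    have heq : ∫ s in Ioc a (τ + 1/2), ((s-τ)^2 - 1/4) * w s
        = (∫ s in Ioc a (τ + 1/2), (s-τ)^2 * w s)
          - (1/4) * ∫ s in Ioc a (τ + 1/2), w s := by
      rw [← MeasureTheory.integral_const_mul, ← MeasureTheory.integral_sub hgwI (hwI.const_mul _)]
      congr 1; funext s; ring
    rw [heq] at hstep
    linarith
  -- compute ∫_I ((s-τ)^2 - 1/4)
  have hcompute : (-1/6 : ℝ) ≤ ∫ s in Ioc a (τ + 1/2), ((s-τ)^2 - 1/4) := by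
    have hval : ∫ s in Ioc a (τ + 1/2), ((s-τ)^2 - 1/4)
        = ((τ + 1/2 - τ)^3 - (a-τ)^3)/3 - (τ + 1/2 - a)/4 := by
      rw [← intervalIntegral.integral_of_le hac]
      have h1 : ∫ s in a..(τ + 1/2), ((s-τ)^2 - 1/4) =
          (∫ s in a..(τ + 1/2), (s-τ)^2) - ∫ s in a..(τ + 1/2), (1/4 : ℝ) := by
        apply intervalIntegral.integral_sub
        · exact ((continuous_id.sub continuous_const).pow 2).intervalIntegrable _ _
        · exact intervalIntegrable_const
      rw [h1, intervalIntegral.integral_const,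
        intervalIntegral.integral_comp_sub_right (fun u => u^2) τ, integral_pow]
      push_cast
      simp only [smul_eq_mul]
      ring
    rw [hval]
    nlinarith [sq_nonneg (2*(τ - a) - 1), hu0, hu1]
  -- combine
  rw [hsplit _ hgint]
  linarith

lemma tendsto_tail (f : ℝ → ℝ) (hf : IntegrableOn f (Ioi 0)) :
    Tendsto (fun T => ∫ s in Ioi T, f s) atTop (𝓝 0) := by
  have h1 := intervalIntegral_tendsto_integral_Ioi 0 hf tendsto_id
  have heq : ∀ᶠ T in atTop, (∫ s in Ioi (0:ℝ), f s) - (∫ s in (0:ℝ)..T, f s)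
      = ∫ s in Ioi T, f s := by
    filter_upwards [eventually_gt_atTop (0:ℝ)] with T hT
    have hsplit : ∫ s in Ioi (0:ℝ), f s = (∫ s in Ioc 0 T, f s) + ∫ s in Ioi T, f s := by
      rw [← Ioc_union_Ioi_eq_Ioi hT.le]
      exact setIntegral_union (Ioc_disjoint_Ioi le_rfl) measurableSet_Ioi
        (hf.mono_set (Ioc_subset_Ioi_self.trans (by simp)))
        (hf.mono_set (Ioi_subset_Ioi hT.le))
    rw [intervalIntegral.integral_of_le hT.le]
    linarith
  have h2 := (tendsto_const_nhds (x := ∫ s in Ioi (0:ℝ), f s)).sub h1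
  rw [sub_self] at h2
  exact h2.congr' heq

lemma decay (b : ℝ) (hb : 2 ≤ b) (ψ : ℝ → ℝ) (hpos : ∀ s, 0 ≤ s → 0 ≤ ψ s)
    (hanti : AntitoneOn ψ (Ici 0))
    (hDint : IntegrableOn (fun s => s ^ (b + 3) * ψ s) (Ioi 0)) :
    Tendsto (fun T => T^(b+4) * ψ T) atTop (𝓝 0) := by
  have htail := tendsto_tail _ hDint
  have hhalf : Tendsto (fun T : ℝ => T/2) atTop atTop := by
    apply Tendsto.atTop_div_const (by norm_num) tendsto_id
  have htail2 : Tendsto (fun T : ℝ => 2^(b+4) * ∫ s in Ioi (T/2), s^(b+3) * ψ s)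
      atTop (𝓝 0) := by
    have := (htail.comp hhalf).const_mul ((2:ℝ)^(b+4))
    simpa using this
  apply squeeze_zero' ?_ ?_ htail2
  · filter_upwards [eventually_ge_atTop (1:ℝ)] with T hT
    exact mul_nonneg (Real.rpow_nonneg (by linarith) _) (hpos T (by linarith))
  · filter_upwards [eventually_ge_atTop (1:ℝ)] with T hT
    have hT0 : (0:ℝ) < T := by linarith
    have h2 : (0:ℝ) < T/2 := by linarith
    have hsubI : Ioc (T/2) T ⊆ Ioi 0 := fun x hx => lt_trans h2 hx.1
    have step1 : ((T/2)^(b+3) * ψ T) * (T - T/2) ≤ ∫ s in Ioc (T/2) T, s^(b+3) * ψ s := by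
      have hconst : ∫ s in Ioc (T/2) T, ((T/2)^(b+3) * ψ T)
          = ((T/2)^(b+3) * ψ T) * (T - T/2) := by
        rw [setIntegral_const, Real.volume_real_Ioc_of_le (by linarith),
          smul_eq_mul]
        ring
      rw [← hconst]
      apply setIntegral_mono_on (integrableOn_const measure_Ioc_lt_top.ne)
        (hDint.mono_set hsubI) measurableSet_Ioc
      intro s hs
      have hs0 : 0 < s := lt_trans h2 hs.1
      have hr : (T/2)^(b+3) ≤ s^(b+3) := Real.rpow_le_rpow h2.le hs.1.le (by linarith)
      have hψ : ψ T ≤ ψ s := hanti (mem_Ici.mpr hs0.le) (mem_Ici.mpr hT0.le) hs.2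
      have hψT : 0 ≤ ψ T := hpos T hT0.le
      nlinarith [Real.rpow_nonneg h2.le (b+3), Real.rpow_nonneg hs0.le (b+3)]
    have step2 : ∫ s in Ioc (T/2) T, s^(b+3) * ψ s ≤ ∫ s in Ioi (T/2), s^(b+3) * ψ s := by
      apply setIntegral_mono_set (hDint.mono_set (Ioi_subset_Ioi h2.le))
      · rw [EventuallyLE]
        apply (ae_restrict_iff' measurableSet_Ioi).mpr
        apply ae_of_all
        intro s hs
        exact mul_nonneg (Real.rpow_nonneg (le_trans h2.le (le_of_lt hs)) _)
          (hpos s (le_trans h2.le (le_of_lt hs)))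
      · exact HasSubset.Subset.eventuallyLE Ioc_subset_Ioi_self
    have e1 : ((2:ℝ))^(b+4) * (T/2)^(b+4) = T^(b+4) := by
      rw [← Real.mul_rpow (by norm_num) h2.le]
      congr 1
      ring
    have e2 : (T/2)^(b+4) = (T/2)^(b+3) * (T/2) := by
      rw [show b+4 = b+3+1 by ring, Real.rpow_add h2, Real.rpow_one]
    have e3 : T^(b+4) * ψ T = 2^(b+4) * (((T/2)^(b+3) * ψ T) * (T - T/2)) := by
      rw [← e1, e2]; ring
    rw [e3]
    have h2pow : (0:ℝ) ≤ 2^(b+4) := Real.rpow_nonneg (by norm_num) _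
    exact mul_le_mul_of_nonneg_left (step1.trans step2) h2pow

lemma decay_psi (b : ℝ) (hb : 2 ≤ b) (ψ : ℝ → ℝ) (hpos : ∀ s, 0 ≤ s → 0 ≤ ψ s)
    (hanti : AntitoneOn ψ (Ici 0))
    (hDint : IntegrableOn (fun s => s ^ (b + 3) * ψ s) (Ioi 0)) :
    Tendsto ψ atTop (𝓝 0) := by
  apply squeeze_zero' ?_ ?_ (decay b hb ψ hpos hanti hDint)
  · filter_upwards [eventually_ge_atTop (1:ℝ)] with T hT
    exact hpos T (by linarith)
  · filter_upwards [eventually_ge_atTop (1:ℝ)] with T hT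
    have h1 : (1:ℝ) ≤ T^(b+4) := Real.one_le_rpow hT (by linarith)
    exact le_mul_of_one_le_left (hpos T (by linarith)) h1

lemma decay_b (b : ℝ) (hb : 2 ≤ b) (ψ : ℝ → ℝ) (hpos : ∀ s, 0 ≤ s → 0 ≤ ψ s)
    (hanti : AntitoneOn ψ (Ici 0))
    (hDint : IntegrableOn (fun s => s ^ (b + 3) * ψ s) (Ioi 0)) :
    Tendsto (fun T => T^b * ψ T) atTop (𝓝 0) := by
  apply squeeze_zero' ?_ ?_ (decay b hb ψ hpos hanti hDint)
  · filter_upwards [eventually_ge_atTop (1:ℝ)] with T hT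
    exact mul_nonneg (Real.rpow_nonneg (by linarith) _) (hpos T (by linarith))
  · filter_upwards [eventually_ge_atTop (1:ℝ)] with T hT
    have h1 : T^b ≤ T^(b+4) := Real.rpow_le_rpow_of_exponent_le hT (by linarith)
    exact mul_le_mul_of_nonneg_right h1 (hpos T (by linarith))

lemma ibp_interval (ψ : ℝ → ℝ) (hdiff : Differentiable ℝ ψ)
    (hderiv : ∀ s, 0 ≤ s → -1 ≤ deriv ψ s ∧ deriv ψ s ≤ 0)
    (p : ℝ) (hp : 2 ≤ p) (T : ℝ) (hT : 0 ≤ T) :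
    ∫ s in (0:ℝ)..T, (p * s^(p-1) * ψ s + s^p * deriv ψ s) = T^p * ψ T := by
  have hder : ∀ s : ℝ, HasDerivAt (fun s => s^p * ψ s)
      (p * s^(p-1) * ψ s + s^p * deriv ψ s) s := by
    intro s
    have h1 : HasDerivAt (fun s : ℝ => s^p) (p * s^(p-1)) s :=
      Real.hasDerivAt_rpow_const (Or.inr (by linarith))
    exact h1.mul (hdiff s).hasDerivAt
  have hint : IntervalIntegrable (fun s => p * s^(p-1) * ψ s + s^p * deriv ψ s)
      volume 0 T := by
    apply IntervalIntegrable.add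
    · apply Continuous.intervalIntegrable
      exact (continuous_const.mul (Real.continuous_rpow_const (by linarith))).mul
        hdiff.continuous
    · rw [intervalIntegrable_iff_integrableOn_Ioc_of_le hT]
      apply Measure.integrableOn_of_bounded (M := T^p) measure_Ioc_lt_top.ne
      · exact ((Real.continuous_rpow_const (by linarith)).measurable.mul
          (measurable_deriv ψ)).aestronglyMeasurable
      · apply (ae_restrict_iff' measurableSet_Ioc).mpr (ae_of_all _ ?_)
        intro s hs
        have hs0 : 0 < s := hs.1
        obtain ⟨hd1, hd2⟩ := hderiv s hs0.le
        have hsp : (0:ℝ) ≤ s^p := Real.rpow_nonneg hs0.le _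
        have hsT : s^p ≤ T^p := Real.rpow_le_rpow hs0.le hs.2 (by linarith)
        rw [Real.norm_eq_abs, abs_mul, abs_of_nonneg hsp]
        have habs : |deriv ψ s| ≤ 1 := abs_le.mpr ⟨hd1, by linarith⟩
        nlinarith
  have := intervalIntegral.integral_eq_sub_of_hasDerivAt (fun s _ => hder s) hint
  rw [this, Real.zero_rpow (by linarith)]
  ring

lemma moment_ibp (ψ : ℝ → ℝ) (hpos : ∀ s, 0 ≤ s → 0 ≤ ψ s)
    (hdiff : Differentiable ℝ ψ)
    (hderiv : ∀ s, 0 ≤ s → -1 ≤ deriv ψ s ∧ deriv ψ s ≤ 0)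
    (p : ℝ) (hp : 2 ≤ p)
    (hint : IntegrableOn (fun s => s^(p-1) * ψ s) (Ioi 0))
    (hlim : Tendsto (fun T => T^p * ψ T) atTop (𝓝 0)) :
    IntegrableOn (fun s => s^p * (-(deriv ψ s))) (Ioi 0) ∧
      ∫ s in Ioi (0:ℝ), s^p * (-(deriv ψ s)) = p * ∫ s in Ioi (0:ℝ), s^(p-1) * ψ s := by
  set A := ∫ s in Ioi (0:ℝ), s^(p-1) * ψ s with hA
  have hnn : ∀ s : ℝ, 0 < s → 0 ≤ s^p * (-(deriv ψ s)) := fun s hs =>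
    mul_nonneg (Real.rpow_nonneg hs.le _) (by linarith [(hderiv s hs.le).2])
  have hnnA : ∀ s : ℝ, 0 < s → 0 ≤ s^(p-1) * ψ s := fun s hs =>
    mul_nonneg (Real.rpow_nonneg hs.le _) (hpos s hs.le)
  -- interval value
  have hval : ∀ T : ℝ, 0 ≤ T → ∫ s in (0:ℝ)..T, s^p * (-(deriv ψ s))
      = p * (∫ s in (0:ℝ)..T, s^(p-1) * ψ s) - T^p * ψ T := by
    intro T hT
    have h1 := ibp_interval ψ hdiff hderiv p hp T hT
    have hc : IntervalIntegrable (fun s => p * s^(p-1) * ψ s) volume 0 T := by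
      apply Continuous.intervalIntegrable
      exact (continuous_const.mul (Real.continuous_rpow_const (by linarith))).mul
        hdiff.continuous
    have hd : IntervalIntegrable (fun s => s^p * deriv ψ s) volume 0 T := by
      rw [intervalIntegrable_iff_integrableOn_Ioc_of_le hT]
      apply Measure.integrableOn_of_bounded (M := T^p) measure_Ioc_lt_top.ne
      · exact ((Real.continuous_rpow_const (by linarith)).measurable.mul
          (measurable_deriv ψ)).aestronglyMeasurable
      · apply (ae_restrict_iff' measurableSet_Ioc).mpr (ae_of_all _ ?_)
        intro s hs
        obtain ⟨hd1, hd2⟩ := hderiv s hs.1.le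
        have hsp : (0:ℝ) ≤ s^p := Real.rpow_nonneg hs.1.le _
        have hsT : s^p ≤ T^p := Real.rpow_le_rpow hs.1.le hs.2 (by linarith)
        rw [Real.norm_eq_abs, abs_mul, abs_of_nonneg hsp]
        have habs : |deriv ψ s| ≤ 1 := abs_le.mpr ⟨hd1, by linarith⟩
        nlinarith
    rw [intervalIntegral.integral_add hc hd] at h1
    have h2 : ∫ s in (0:ℝ)..T, p * s^(p-1) * ψ s
        = p * ∫ s in (0:ℝ)..T, s^(p-1) * ψ s := by
      rw [← intervalIntegral.integral_const_mul]
      congr 1; funext s; ring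
    have h3 : ∫ s in (0:ℝ)..T, s^p * (-(deriv ψ s))
        = - ∫ s in (0:ℝ)..T, s^p * deriv ψ s := by
      rw [← intervalIntegral.integral_neg]
      congr 1; funext s; ring
    rw [h3]
    rw [h2] at h1
    linarith
  -- interval integral of target dominated
  have hintT : ∀ T : ℝ, IntegrableOn (fun s => s^p * (-(deriv ψ s))) (Ioc 0 T) := by
    intro T
    rcases le_total T 0 with hT | hT
    · rw [Ioc_eq_empty (by exact not_lt.mpr hT)]
      exact integrableOn_empty
    · apply Measure.integrableOn_of_bounded (M := T^p) measure_Ioc_lt_top.ne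
      · exact ((Real.continuous_rpow_const (by linarith)).measurable.mul
          ((measurable_deriv ψ).neg)).aestronglyMeasurable
      · apply (ae_restrict_iff' measurableSet_Ioc).mpr (ae_of_all _ ?_)
        intro s hs
        obtain ⟨hd1, hd2⟩ := hderiv s hs.1.le
        have hsp : (0:ℝ) ≤ s^p := Real.rpow_nonneg hs.1.le _
        have hsT : s^p ≤ T^p := Real.rpow_le_rpow hs.1.le hs.2 (by linarith)
        rw [Real.norm_eq_abs, abs_mul, abs_of_nonneg hsp]
        have habs : |-(deriv ψ s)| ≤ 1 := by rw [abs_neg]; exact abs_le.mpr ⟨hd1, by linarith⟩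
        nlinarith
  -- norm of interval integrals bounded by p * A
  have hbnd : ∀ᶠ T in (atTop : Filter ℝ),
      (∫ s in (0:ℝ)..T, ‖s^p * (-(deriv ψ s))‖) ≤ p * A := by
    filter_upwards [eventually_ge_atTop (0:ℝ)] with T hT
    have hnorm : ∫ s in (0:ℝ)..T, ‖s^p * (-(deriv ψ s))‖
        = ∫ s in (0:ℝ)..T, s^p * (-(deriv ψ s)) := by
      apply intervalIntegral.integral_congr
      intro s hs
      rw [uIcc_of_le hT] at hs
      rcases eq_or_lt_of_le hs.1 with h | h
      · rw [← h]
        simp [Real.zero_rpow (show p ≠ 0 by linarith)]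
      · exact Real.norm_of_nonneg (hnn s h)
    rw [hnorm, hval T hT]
    have hTψ : 0 ≤ T^p * ψ T := mul_nonneg (Real.rpow_nonneg hT _) (hpos T hT)
    have hIle : ∫ s in (0:ℝ)..T, s^(p-1) * ψ s ≤ A := by
      rw [intervalIntegral.integral_of_le hT]
      apply setIntegral_mono_set hint
      · apply (ae_restrict_iff' measurableSet_Ioi).mpr (ae_of_all _ ?_)
        intro s hs
        exact hnnA s hs
      · exact HasSubset.Subset.eventuallyLE (Ioc_subset_Ioi_self.trans (by simp))
    nlinarith
  have hIoi : IntegrableOn (fun s => s^p * (-(deriv ψ s))) (Ioi 0) :=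
    integrableOn_Ioi_of_intervalIntegral_norm_bounded (p*A) 0 hintT tendsto_id hbnd
  refine ⟨hIoi, ?_⟩
  have t1 := intervalIntegral_tendsto_integral_Ioi 0 hIoi tendsto_id
  have t2 := intervalIntegral_tendsto_integral_Ioi 0 hint tendsto_id
  have t3 : Tendsto (fun T => p * (∫ s in (0:ℝ)..T, s^(p-1) * ψ s) - T^p * ψ T)
      atTop (𝓝 (p * A - 0)) := (t2.const_mul p).sub hlim
  rw [sub_zero] at t3
  have hcong : ∀ᶠ T in (atTop : Filter ℝ),
      (∫ s in (0:ℝ)..T, s^p * (-(deriv ψ s)))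
        = p * (∫ s in (0:ℝ)..T, s^(p-1) * ψ s) - T^p * ψ T := by
    filter_upwards [eventually_ge_atTop (0:ℝ)] with T hT
    exact hval T hT
  exact tendsto_nhds_unique (t1.congr' hcong) t3

lemma total_mass (ψ : ℝ → ℝ) (hpos : ∀ s, 0 ≤ s → 0 ≤ ψ s)
    (hdiff : Differentiable ℝ ψ)
    (hderiv : ∀ s, 0 ≤ s → -1 ≤ deriv ψ s ∧ deriv ψ s ≤ 0)
    (hψ0 : ψ 0 = 1)
    (hlim : Tendsto ψ atTop (𝓝 0)) :
    IntegrableOn (fun s => -(deriv ψ s)) (Ioi 0) ∧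
      ∫ s in Ioi (0:ℝ), -(deriv ψ s) = 1 := by
  have hmble : AEStronglyMeasurable (fun s => -(deriv ψ s)) volume :=
    ((measurable_deriv ψ).neg).aestronglyMeasurable
  have hbd : ∀ T : ℝ, IntegrableOn (fun s => -(deriv ψ s)) (Ioc 0 T) := by
    intro T
    apply Measure.integrableOn_of_bounded (M := 1) measure_Ioc_lt_top.ne
    · exact ((measurable_deriv ψ).neg).aestronglyMeasurable
    · apply (ae_restrict_iff' measurableSet_Ioc).mpr (ae_of_all _ ?_)
      intro s hs
      obtain ⟨hd1, hd2⟩ := hderiv s hs.1.le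
      rw [Real.norm_eq_abs, abs_neg]
      exact abs_le.mpr ⟨hd1, by linarith⟩
  have hval : ∀ T : ℝ, 0 ≤ T → ∫ s in (0:ℝ)..T, -(deriv ψ s) = 1 - ψ T := by
    intro T hT
    have hd : IntervalIntegrable (fun s => deriv ψ s) volume 0 T := by
      rw [intervalIntegrable_iff_integrableOn_Ioc_of_le hT]
      exact (hbd T).neg.congr (ae_of_all _ (fun s => by simp))
    have := intervalIntegral.integral_eq_sub_of_hasDerivAt
      (f := ψ) (f' := deriv ψ) (fun s _ => (hdiff s).hasDerivAt) hd
    rw [intervalIntegral.integral_neg, this, hψ0]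
    ring
  have hbnd : ∀ᶠ T in (atTop : Filter ℝ),
      (∫ s in (0:ℝ)..T, ‖-(deriv ψ s)‖) ≤ 1 := by
    filter_upwards [eventually_ge_atTop (0:ℝ)] with T hT
    have hnorm : ∫ s in (0:ℝ)..T, ‖-(deriv ψ s)‖ = ∫ s in (0:ℝ)..T, -(deriv ψ s) := by
      apply intervalIntegral.integral_congr
      intro s hs
      rw [uIcc_of_le hT] at hs
      exact Real.norm_of_nonneg (by linarith [(hderiv s hs.1).2])
    rw [hnorm, hval T hT]
    linarith [hpos T hT]
  have hIoi : IntegrableOn (fun s => -(deriv ψ s)) (Ioi 0) :=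
    integrableOn_Ioi_of_intervalIntegral_norm_bounded 1 0 hbd tendsto_id hbnd
  refine ⟨hIoi, ?_⟩
  have t1 := intervalIntegral_tendsto_integral_Ioi 0 hIoi tendsto_id
  have t3 : Tendsto (fun T : ℝ => 1 - ψ T) atTop (𝓝 (1 - 0)) :=
    tendsto_const_nhds.sub hlim
  rw [sub_zero] at t3
  have hcong : ∀ᶠ T in (atTop : Filter ℝ),
      (∫ s in (0:ℝ)..T, -(deriv ψ s)) = 1 - ψ T := by
    filter_upwards [eventually_ge_atTop (0:ℝ)] with T hT
    exact hval T hT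
  exact tendsto_nhds_unique (t1.congr' hcong) t3


end AuxLemmas

theorem stmt_3 (b : ℝ) (hb : 2 ≤ b) (ψ : ℝ → ℝ)
    (hpos : ∀ s, 0 ≤ s → 0 ≤ ψ s)
    (hanti : AntitoneOn ψ (Ici 0))
    (hdiff : Differentiable ℝ ψ)
    (hderiv : ∀ s, 0 ≤ s → -1 ≤ deriv ψ s ∧ deriv ψ s ≤ 0)
    (hψ0 : ψ 0 = 1)
    (hAint : IntegrableOn (fun s => s ^ (b - 1) * ψ s) (Ioi 0))
    (hA : 0 < ∫ s in Ioi (0 : ℝ), s ^ (b - 1) * ψ s)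
    (hDint : IntegrableOn (fun s => s ^ (b + 3) * ψ s) (Ioi 0))
    (τ : ℝ) (hτ : 0 < τ) :
    (1 / 3) * τ ^ (b + 2) ≤
      b * (b + 4) * (∫ s in Ioi (0 : ℝ), s ^ (b + 3) * ψ s)
        - (b + 4) * τ ^ (4 : ℕ) * (b * ∫ s in Ioi (0 : ℝ), s ^ (b - 1) * ψ s)
        + 4 * τ ^ (b + 4) := by
  obtain ⟨hwint, hwtot⟩ := total_mass ψ hpos hdiff hderiv hψ0
    (decay_psi b hb ψ hpos hanti hDint)
  obtain ⟨hbint, hbeq⟩ := moment_ibp ψ hpos hdiff hderiv b (by linarith) hAint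
    (decay_b b hb ψ hpos hanti hDint)
  have hDint4 : IntegrableOn (fun s => s ^ (b + 4 - 1) * ψ s) (Ioi 0) := by
    rw [show b + 4 - 1 = b + 3 by ring]; exact hDint
  have hlim4 := decay b hb ψ hpos hanti hDint
  obtain ⟨hDint', hDeq⟩ := moment_ibp ψ hpos hdiff hderiv (b+4) (by linarith) hDint4 hlim4
  rw [show b + 4 - 1 = b + 3 by ring] at hDeq
  -- weights, nonnegativity
  have hw0 : ∀ s : ℝ, 0 < s → 0 ≤ -(deriv ψ s) := fun s hs => by
    linarith [(hderiv s hs.le).2]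
  have hw1 : ∀ s : ℝ, 0 < s → -(deriv ψ s) ≤ 1 := fun s hs => by
    linarith [(hderiv s hs.le).1]
  have hwm : Measurable (fun s : ℝ => -(deriv ψ s)) := (measurable_deriv ψ).neg
  -- integrability of (s-τ)^2 * w
  have hgw : IntegrableOn (fun s => (s-τ)^2 * -(deriv ψ s)) (Ioi 0) := by
    have hgdom : IntegrableOn
        (fun s => (2*τ^2+2) * -(deriv ψ s) + 2 * (s^(b+4) * -(deriv ψ s))) (Ioi 0) :=
      (hwint.const_mul _).add (hDint'.const_mul 2)
    apply MeasureTheory.Integrable.mono hgdom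
    · exact ((((continuous_id.sub continuous_const).pow 2).measurable.mul
        hwm).aestronglyMeasurable).restrict
    · apply (ae_restrict_iff' measurableSet_Ioi).mpr (ae_of_all _ ?_)
      intro s hs
      have hs0 : (0:ℝ) < s := hs
      have hwnn := hw0 s hs0
      have hsq : (s-τ)^2 ≤ 2*τ^2 + 2 + 2*s^(b+4) := by
        have h2 : s^2 ≤ 1 + s^(b+4) := by
          rcases le_total s 1 with h1 | h1
          · nlinarith [Real.rpow_nonneg hs0.le (b+4)]
          · have : s^(2:ℝ) ≤ s^(b+4) := Real.rpow_le_rpow_of_exponent_le h1 (by linarith)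
            rw [show s^(2:ℝ) = s^(2:ℕ) from Real.rpow_natCast s 2] at this
            nlinarith [this]
        nlinarith
      have hb4nn : (0:ℝ) ≤ s^(b+4) := Real.rpow_nonneg hs0.le _
      rw [Real.norm_eq_abs, Real.norm_eq_abs, abs_of_nonneg (by positivity),
        abs_of_nonneg (by nlinarith)]
      nlinarith
  -- pointwise comparison integral
  have hkey : ∫ s in Ioi (0:ℝ), 4 * τ^(b+2) * ((s-τ)^2 * -(deriv ψ s))
      ≤ ∫ s in Ioi (0:ℝ),
        (b * s^(b+4) - (b+4) * τ^(4:ℕ) * s^b + 4*τ^(b+4)) * -(deriv ψ s) := by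
    apply setIntegral_mono_on (hgw.const_mul _) ?_ measurableSet_Ioi
    · intro s hs
      have hs0 : (0:ℝ) < s := hs
      have hcmp := aux_scaled b hb hτ hs0.le
      have hwnn := hw0 s hs0
      have := mul_le_mul_of_nonneg_right hcmp hwnn
      calc 4 * τ^(b+2) * ((s-τ)^2 * -(deriv ψ s))
          = (4 * τ^(b+2) * (s-τ)^2) * -(deriv ψ s) := by ring
        _ ≤ _ := this
    · have heq : (fun s => (b * s^(b+4) - (b+4) * τ^(4:ℕ) * s^b + 4*τ^(b+4)) * -(deriv ψ s))
          = fun s => b * (s^(b+4) * -(deriv ψ s)) - (b+4) * τ^(4:ℕ) * (s^b * -(deriv ψ s))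
            + 4*τ^(b+4) * -(deriv ψ s) := by
        funext s; ring
      rw [heq]
      exact ((hDint'.const_mul b).sub (hbint.const_mul _)).add (hwint.const_mul _)
  -- value of the RHS integral
  have hval : ∫ s in Ioi (0:ℝ),
      (b * s^(b+4) - (b+4) * τ^(4:ℕ) * s^b + 4*τ^(b+4)) * -(deriv ψ s)
      = b * (b+4) * (∫ s in Ioi (0:ℝ), s^(b+3) * ψ s)
        - (b+4) * τ^(4:ℕ) * (b * ∫ s in Ioi (0:ℝ), s^(b-1) * ψ s)
        + 4 * τ^(b+4) := by
    have heq : (fun s => (b * s^(b+4) - (b+4) * τ^(4:ℕ) * s^b + 4*τ^(b+4)) * -(deriv ψ s))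
        = fun s => b * (s^(b+4) * -(deriv ψ s)) - (b+4) * τ^(4:ℕ) * (s^b * -(deriv ψ s))
          + 4*τ^(b+4) * -(deriv ψ s) := by
      funext s; ring
    rw [heq]
    have i1 : Integrable (fun s => b * (s^(b+4) * -(deriv ψ s)))
        (volume.restrict (Ioi 0)) := hDint'.const_mul b
    have i2 : Integrable (fun s => (b+4) * τ^(4:ℕ) * (s^b * -(deriv ψ s)))
        (volume.restrict (Ioi 0)) := hbint.const_mul _
    have i3 : Integrable (fun s : ℝ => 4*τ^(b+4) * -(deriv ψ s))
        (volume.restrict (Ioi 0)) := hwint.const_mul _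
    have i12 : Integrable (fun s => b * (s^(b+4) * -(deriv ψ s))
        - (b+4) * τ^(4:ℕ) * (s^b * -(deriv ψ s))) (volume.restrict (Ioi 0)) := i1.sub i2
    rw [MeasureTheory.integral_add i12 i3, MeasureTheory.integral_sub i1 i2,
      MeasureTheory.integral_const_mul, MeasureTheory.integral_const_mul,
      MeasureTheory.integral_const_mul]
    rw [hDeq, hbeq, hwtot]
    ring
  -- bathtub bound
  have hbath := bathtub (fun s => -(deriv ψ s)) hw0 hw1 hwint hwtot τ hτ hgw
  have hconst : ∫ s in Ioi (0:ℝ), 4 * τ^(b+2) * ((s-τ)^2 * -(deriv ψ s))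
      = 4 * τ^(b+2) * ∫ s in Ioi (0:ℝ), (s-τ)^2 * -(deriv ψ s) :=
    MeasureTheory.integral_const_mul _ _
  have hτp : (0:ℝ) < τ^(b+2) := Real.rpow_pos_of_pos hτ _
  rw [← hval]
  have hmul := mul_le_mul_of_nonneg_left hbath (by positivity : (0:ℝ) ≤ 4 * τ^(b+2))
  rw [hconst] at hkey
  nlinarith [hmul, hkey]
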